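/- Under the TI-with-exceptions kernel ridge regression setup, the reduced dual coefficients satisfy the reduced (n−1)-dimensional linear system: δ_s·(B b̄)_i = 1 − δ_o·h̄·((e_p)_i + (e_{q−1})_i − (e_q)_i − (e_{p−1})_i) for all i = 1,…,n−1, and δ_s·(1 + c̃⁻¹)·h̄ + δ_o·(b̄_{q−1} + b̄_p − b̄_q − b̄_{p−1}) = 1, where B is the (n−1)×(n−1) tridiagonal matrix with diagonal entries 1 + c̃⁻¹ and off-diagonal entries −(1−α)/2, e_i denotes the i-th standard basis vector of ℝ^{n−1} (interpreted as the zero vector when the index is 0 or n), and b̄_0 = b̄_n = 0. -/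

import Mathlib

open Real Matrix Finset

noncomputable section

namespace TIExc

/-- Real inverse hyperbolic cosine. -/
def arcosh (x : ℝ) : ℝ := Real.log (x + Real.sqrt (x ^ 2 - 1))

/-- Training index set: adjacent pairs in both orders plus the exception pair in both orders. -/
def T (n p q : ℕ) : Finset (ℕ × ℕ) :=
  ((Finset.Icc 1 (n - 1)).image fun j => (j, j + 1)) ∪
    ((Finset.Icc 1 (n - 1)).image fun j => (j + 1, j)) ∪ {(p, q), (q, p)}

/-- Exchangeable kernel on ordered pairs of items. -/
def ker (κs κo κd : ℝ) (u u' : ℕ × ℕ) : ℝ :=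
  if u = u' then κs else if u.1 = u'.1 ∨ u.2 = u'.2 then κo else κd

/-- Training labels. -/
def lab (p q : ℕ) (u : ℕ × ℕ) : ℝ :=
  if u = (p, q) then 1 else if u = (q, p) then -1 else if u.1 < u.2 then 1 else -1

/-- The training-set kernel matrix. -/
def Kmat (n p q : ℕ) (κs κo κd : ℝ) : Matrix ↥(T n p q) ↥(T n p q) ℝ :=
  fun u u' => ker κs κo κd u.1 u'.1

/-- Dual coefficients `a = (K + c⁻¹ I)⁻¹ y`. -/
def dual (n p q : ℕ) (κs κo κd c : ℝ) : ↥(T n p q) → ℝ :=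
  (Kmat n p q κs κo κd + c⁻¹ • (1 : Matrix ↥(T n p q) ↥(T n p q) ℝ))⁻¹ *ᵥ
    fun u => lab p q u.1

/-- Dual coefficient at an ordered pair (`0` off the training set). -/
def aAt (n p q : ℕ) (κs κo κd c : ℝ) (u : ℕ × ℕ) : ℝ :=
  if h : u ∈ T n p q then dual n p q κs κo κd c ⟨u, h⟩ else 0

/-- `b̄ⱼ = a₍ⱼ,ⱼ₊₁₎`, with the convention `b̄₀ = b̄ₙ = 0`. -/
def bbar (n p q : ℕ) (κs κo κd c : ℝ) (j : ℕ) : ℝ :=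
  aAt n p q κs κo κd c (j, j + 1)

/-- `h̄ = a₍ₚ,q₎`. -/
def hbar (n p q : ℕ) (κs κo κd c : ℝ) : ℝ :=
  aAt n p q κs κo κd c (p, q)

/-- Model prediction `f(u) = ∑_{u' ∈ T} κ(u,u') a_{u'}`. -/
def pred (n p q : ℕ) (κs κo κd c : ℝ) (u : ℕ × ℕ) : ℝ :=
  ∑ u' : ↥(T n p q), ker κs κo κd u u'.1 * dual n p q κs κo κd c u'

/-- Emergent rank `rⱼ = δₒ(b̄ⱼ − b̄ⱼ₋₁) + δₒ h̄ ([j = p] − [j = q])`. -/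
def rank (n p q : ℕ) (κs κo κd c : ℝ) (j : ℕ) : ℝ :=
  (κo - κd) * (bbar n p q κs κo κd c j - bbar n p q κs κo κd c (j - 1)) +
    (κo - κd) * hbar n p q κs κo κd c *
      ((if j = p then 1 else 0) - (if j = q then 1 else 0))

/-- `λ = arccosh((1 + c̃⁻¹)/(1 − α))`. -/
def lam (α ctil : ℝ) : ℝ := arcosh ((1 + ctil⁻¹) / (1 - α))

/-- The no-exception TI rank `r_j^TI`. -/
def rTI (n : ℕ) (l : ℝ) (j : ℕ) : ℝ :=
  Real.sinh ((((n : ℝ) + 1) / 2 - (j : ℝ)) * l) /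
    (Real.sinh (((n : ℝ) + 1) / 2 * l) - Real.sinh (((n : ℝ) - 1) / 2 * l))

/-- `D̃ᵢⱼ = cosh((min(i,j) − 1/2)λ)·cosh((n − max(i,j) + 1/2)λ)`. -/
def Dtil (n : ℕ) (l : ℝ) (i j : ℕ) : ℝ :=
  Real.cosh (((min i j : ℕ) - (1 : ℝ) / 2) * l) *
    Real.cosh (((n : ℝ) - (max i j : ℕ) + 1 / 2) * l)

/-- The quantity `G`. -/
def Gq (n p q : ℕ) (l : ℝ) : ℝ :=
  Real.cosh (((q : ℝ) - 1 / 2) * l) *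
      Real.sinh (((n : ℝ) - ((p : ℝ) + (q : ℝ) - 1) / 2) * l) +
    Real.cosh (((n : ℝ) - (p : ℝ) + 1 / 2) * l) *
      Real.sinh ((((p : ℝ) + (q : ℝ) - 1) / 2) * l)


/-- The reduced `(n−1)×(n−1)` tridiagonal matrix `B` with diagonal `1 + c̃⁻¹`
and off-diagonal `−(1−α)/2`. -/
def Bmat (n : ℕ) (α ctil : ℝ) : Matrix (Fin (n - 1)) (Fin (n - 1)) ℝ :=
  fun i j =>
    if i = j then 1 + ctil⁻¹
    else if (i : ℕ) + 1 = (j : ℕ) ∨ (j : ℕ) + 1 = (i : ℕ) then -((1 - α) / 2)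
    else 0

/-- The `m`-th standard basis vector of `ℝ^(n−1)` (1-based indexing), interpreted
as the zero vector when `m = 0` or `m = n`. -/
def stdBasis (n m : ℕ) : Fin (n - 1) → ℝ := fun i => if (i : ℕ) + 1 = m then 1 else 0

lemma mem_T_iff {n p q : ℕ} {u : ℕ × ℕ} :
    u ∈ T n p q ↔ (∃ j, 1 ≤ j ∧ j ≤ n - 1 ∧ u = (j, j + 1)) ∨
      (∃ j, 1 ≤ j ∧ j ≤ n - 1 ∧ u = (j + 1, j)) ∨ u = (p, q) ∨ u = (q, p) := by
  simp only [T, Finset.mem_union, Finset.mem_image, Finset.mem_Icc, Finset.mem_insert,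
    Finset.mem_singleton]
  constructor
  · rintro ((⟨j, ⟨h1, h2⟩, rfl⟩ | ⟨j, ⟨h1, h2⟩, rfl⟩) | h | h)
    · exact Or.inl ⟨j, h1, h2, rfl⟩
    · exact Or.inr (Or.inl ⟨j, h1, h2, rfl⟩)
    · exact Or.inr (Or.inr (Or.inl h))
    · exact Or.inr (Or.inr (Or.inr h))
  · rintro (⟨j, h1, h2, rfl⟩ | ⟨j, h1, h2, rfl⟩ | h | h)
    · exact Or.inl (Or.inl ⟨j, ⟨h1, h2⟩, rfl⟩)
    · exact Or.inl (Or.inr ⟨j, ⟨h1, h2⟩, rfl⟩)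
    · exact Or.inr (Or.inl h)
    · exact Or.inr (Or.inr h)

section withHyp
variable {n p q : ℕ} (hq1 : 1 ≤ q) (hqp : q < p) (hpn : p ≤ n) (hgap : 2 ≤ p - q) (hn : 3 ≤ n)

include hq1 hqp hgap in
lemma mem_T_adj {j : ℕ} : (j, j + 1) ∈ T n p q ↔ 1 ≤ j ∧ j ≤ n - 1 := by
  rw [mem_T_iff]
  constructor
  · rintro (⟨k, h1, h2, he⟩ | ⟨k, h1, h2, he⟩ | he | he) <;>
      simp only [Prod.mk.injEq] at he <;> omega
  · intro h; exact Or.inl ⟨j, h.1, h.2, rfl⟩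

include hq1 hqp hgap in
lemma mem_T_rev {j : ℕ} : (j + 1, j) ∈ T n p q ↔ 1 ≤ j ∧ j ≤ n - 1 := by
  rw [mem_T_iff]
  constructor
  · rintro (⟨k, h1, h2, he⟩ | ⟨k, h1, h2, he⟩ | he | he) <;>
      simp only [Prod.mk.injEq] at he <;> omega
  · intro h; exact Or.inr (Or.inl ⟨j, h.1, h.2, rfl⟩)

lemma swap_mem_T {u : ℕ × ℕ} (h : u ∈ T n p q) : (u.2, u.1) ∈ T n p q := by
  rw [mem_T_iff] at h ⊢
  obtain (⟨j, h1, h2, rfl⟩ | ⟨j, h1, h2, rfl⟩ | rfl | rfl) := h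
  · exact Or.inr (Or.inl ⟨j, h1, h2, rfl⟩)
  · exact Or.inl ⟨j, h1, h2, rfl⟩
  · exact Or.inr (Or.inr (Or.inr rfl))
  · exact Or.inr (Or.inr (Or.inl rfl))

include hq1 hqp in
lemma ne_of_mem_T {u : ℕ × ℕ} (h : u ∈ T n p q) : u.1 ≠ u.2 := by
  rw [mem_T_iff] at h
  obtain (⟨j, h1, h2, rfl⟩ | ⟨j, h1, h2, rfl⟩ | rfl | rfl) := h <;> simp <;> omega

include hq1 hqp hpn in
lemma coord_le_of_mem_T {u : ℕ × ℕ} (h : u ∈ T n p q) : u.1 ≤ n ∧ u.2 ≤ n := by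
  rw [mem_T_iff] at h
  obtain (⟨j, h1, h2, rfl⟩ | ⟨j, h1, h2, rfl⟩ | rfl | rfl) := h <;> simp <;> omega

end withHyp

lemma ker_decomp (κs κo κd : ℝ) (u u' : ℕ × ℕ) :
    ker κs κo κd u u' = κd + ((if u.1 = u'.1 then κo - κd else 0) +
      (if u.2 = u'.2 then κo - κd else 0) + (if u = u' then κs - κd - 2 * (κo - κd) else 0)) := by
  unfold ker
  by_cases h : u = u'
  · subst h; simp; ring
  · rw [if_neg h, if_neg h]
    by_cases h1 : u.1 = u'.1 <;> by_cases h2 : u.2 = u'.2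
    · exact absurd (Prod.ext h1 h2) h
    · simp [h1, h2]
    · simp [h1, h2]
    · simp [h1, h2]

variable {n p q : ℕ}

private def Gc (n p q : ℕ) (x : ℝ) : Matrix ↥(T n p q) (Fin 1) ℝ := fun _ _ => x

private def G1 (n p q : ℕ) (x : ℝ) : Matrix ↥(T n p q) (Fin (n + 1)) ℝ :=
  fun u j => if (u : ℕ × ℕ).1 = (j : ℕ) then x else 0

private def G2 (n p q : ℕ) (x : ℝ) : Matrix ↥(T n p q) (Fin (n + 1)) ℝ :=
  fun u j => if (u : ℕ × ℕ).2 = (j : ℕ) then x else 0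

private lemma Gc_apply (x : ℝ) (u u' : ↥(T n p q)) :
    (Gc n p q x * (Gc n p q x)ᴴ) u u' = x * x := by
  simp [Gc, Matrix.mul_apply]

private lemma G1_apply (x : ℝ) (hb : ∀ u : ↥(T n p q), (u : ℕ × ℕ).1 ≤ n)
    (u u' : ↥(T n p q)) :
    (G1 n p q x * (G1 n p q x)ᴴ) u u' =
      if (u : ℕ × ℕ).1 = (u' : ℕ × ℕ).1 then x * x else 0 := by
  rw [Matrix.mul_apply]
  have hlt : (u : ℕ × ℕ).1 < n + 1 := Nat.lt_succ_of_le (hb u)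
  rw [Finset.sum_eq_single (⟨(u : ℕ × ℕ).1, hlt⟩ : Fin (n + 1))]
  · by_cases h : (u : ℕ × ℕ).1 = (u' : ℕ × ℕ).1
    · simp [G1, h]
    · simp [G1, h, Ne.symm h]
  · intro j _ hj
    simp only [G1, conjTranspose_apply, star_trivial]
    rw [if_neg, zero_mul]
    intro hh
    exact hj (Fin.ext hh.symm)
  · intro h; exact absurd (Finset.mem_univ _) h

private lemma G2_apply (x : ℝ) (hb : ∀ u : ↥(T n p q), (u : ℕ × ℕ).2 ≤ n)
    (u u' : ↥(T n p q)) :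
    (G2 n p q x * (G2 n p q x)ᴴ) u u' =
      if (u : ℕ × ℕ).2 = (u' : ℕ × ℕ).2 then x * x else 0 := by
  rw [Matrix.mul_apply]
  have hlt : (u : ℕ × ℕ).2 < n + 1 := Nat.lt_succ_of_le (hb u)
  rw [Finset.sum_eq_single (⟨(u : ℕ × ℕ).2, hlt⟩ : Fin (n + 1))]
  · by_cases h : (u : ℕ × ℕ).2 = (u' : ℕ × ℕ).2
    · simp [G2, h]
    · simp [G2, h, Ne.symm h]
  · intro j _ hj
    simp only [G2, conjTranspose_apply, star_trivial]
    rw [if_neg, zero_mul]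
    intro hh
    exact hj (Fin.ext hh.symm)
  · intro h; exact absurd (Finset.mem_univ _) h

lemma Kmat_posSemidef (κs κo κd : ℝ)
    (hb : ∀ u : ↥(T n p q), (u : ℕ × ℕ).1 ≤ n ∧ (u : ℕ × ℕ).2 ≤ n)
    (hκd : 0 ≤ κd) (hκo : κd < κo) (hκs : 2 * (κo - κd) ≤ κs - κd) :
    (Kmat n p q κs κo κd).PosSemidef := by
  have hδo : (0:ℝ) ≤ κo - κd := by linarith
  have hδd : (0:ℝ) ≤ κs - κd - 2 * (κo - κd) := by linarith
  have hK : Kmat n p q κs κo κd =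
      Gc n p q (Real.sqrt κd) * (Gc n p q (Real.sqrt κd))ᴴ +
      (G1 n p q (Real.sqrt (κo - κd)) * (G1 n p q (Real.sqrt (κo - κd)))ᴴ +
       G2 n p q (Real.sqrt (κo - κd)) * (G2 n p q (Real.sqrt (κo - κd)))ᴴ +
       diagonal (fun _ : ↥(T n p q) => κs - κd - 2 * (κo - κd))) := by
    ext u u'
    rw [Matrix.add_apply, Matrix.add_apply, Matrix.add_apply, Gc_apply,
      G1_apply _ (fun u => (hb u).1), G2_apply _ (fun u => (hb u).2),
      Real.mul_self_sqrt hκd, Real.mul_self_sqrt hδo, Matrix.diagonal_apply]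
    show ker κs κo κd u.1 u'.1 = _
    rw [ker_decomp]
    simp only [Subtype.coe_inj]
  rw [hK]
  exact (Matrix.posSemidef_self_mul_conjTranspose _).add
    (((Matrix.posSemidef_self_mul_conjTranspose _).add
      (Matrix.posSemidef_self_mul_conjTranspose _)).add
      (Matrix.PosSemidef.diagonal (fun _ => hδd)))

lemma Mmat_posDef (κs κo κd c : ℝ)
    (hb : ∀ u : ↥(T n p q), (u : ℕ × ℕ).1 ≤ n ∧ (u : ℕ × ℕ).2 ≤ n)
    (hκd : 0 ≤ κd) (hκo : κd < κo) (hκs : 2 * (κo - κd) ≤ κs - κd) (hc : 0 < c) :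
    (Kmat n p q κs κo κd + c⁻¹ • (1 : Matrix ↥(T n p q) ↥(T n p q) ℝ)).PosDef := by
  have h1 : (c⁻¹ • (1 : Matrix ↥(T n p q) ↥(T n p q) ℝ)) =
      diagonal (fun _ => c⁻¹) := Matrix.smul_one_eq_diagonal _
  rw [h1]
  exact Matrix.PosDef.posSemidef_add (Kmat_posSemidef κs κo κd hb hκd hκo hκs)
    (Matrix.PosDef.diagonal (fun _ => inv_pos.mpr hc))

section Main

variable {n p q : ℕ} {κs κo κd c : ℝ}
variable (hn : 3 ≤ n) (hq1 : 1 ≤ q) (hqp : q < p) (hpn : p ≤ n) (hgap : 2 ≤ p - q)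
variable (hκd : 0 ≤ κd) (hκo : κd < κo) (hκs : 2 * (κo - κd) ≤ κs - κd) (hc : 0 < c)

include hq1 hqp hpn hκd hκo hκs hc

lemma Mdet_isUnit :
    IsUnit (Kmat n p q κs κo κd + c⁻¹ • (1 : Matrix ↥(T n p q) ↥(T n p q) ℝ)).det :=
  (Matrix.isUnit_iff_isUnit_det _).mp
    (Mmat_posDef κs κo κd c
      (fun u => coord_le_of_mem_T hq1 hqp hpn u.2) hκd hκo hκs hc).isUnit

lemma full_system :
    (Kmat n p q κs κo κd + c⁻¹ • (1 : Matrix ↥(T n p q) ↥(T n p q) ℝ)) *ᵥ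
      dual n p q κs κo κd c = fun u => lab p q u.1 := by
  unfold dual
  rw [Matrix.mulVec_mulVec, Matrix.mul_nonsing_inv _ (Mdet_isUnit hq1 hqp hpn hκd hκo hκs hc),
    Matrix.one_mulVec]

lemma dual_unique (a' : ↥(T n p q) → ℝ)
    (h : (Kmat n p q κs κo κd + c⁻¹ • (1 : Matrix ↥(T n p q) ↥(T n p q) ℝ)) *ᵥ a' =
      fun u => lab p q u.1) :
    a' = dual n p q κs κo κd c := by
  have h1 := congrArg (fun v =>
    (Kmat n p q κs κo κd + c⁻¹ • (1 : Matrix ↥(T n p q) ↥(T n p q) ℝ))⁻¹ *ᵥ v) h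
  simpa [Matrix.mulVec_mulVec,
    Matrix.nonsing_inv_mul _ (Mdet_isUnit hq1 hqp hpn hκd hκo hκs hc),
    Matrix.one_mulVec, dual] using h1

omit hq1 hqp hpn hκd hκo hκs hc in
lemma ker_swap (a b : ℕ × ℕ) :
    ker κs κo κd a (b.2, b.1) = ker κs κo κd (a.2, a.1) b := by
  unfold ker
  have h1 : (a = (b.2, b.1)) ↔ ((a.2, a.1) = b) := by
    simp [Prod.ext_iff, and_comm]
  have h2 : (a.1 = b.2 ∨ a.2 = b.1) ↔ (a.2 = b.1 ∨ a.1 = b.2) := or_comm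
  rw [if_congr h1 rfl rfl, if_congr h2 rfl rfl]

omit hq1 hqp hpn hκd hκo hκs hc in
include hqp in
lemma lab_swap {a b : ℕ} (hne : a ≠ b) : lab p q (b, a) = - lab p q (a, b) := by
  unfold lab
  by_cases h1 : (a, b) = (p, q)
  · simp only [Prod.mk.injEq] at h1; obtain ⟨rfl, rfl⟩ := h1
    simp [Prod.mk.injEq, hqp.ne, hqp.ne']
  · by_cases h2 : (a, b) = (q, p)
    · simp only [Prod.mk.injEq] at h2; obtain ⟨rfl, rfl⟩ := h2
      simp [Prod.mk.injEq, hqp.ne, hqp.ne']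
    · have h3 : (b, a) ≠ (p, q) := by
        intro hb
        apply h2
        simp only [Prod.mk.injEq] at hb ⊢
        omega
      have h4 : (b, a) ≠ (q, p) := by
        intro hb
        apply h1
        simp only [Prod.mk.injEq] at hb ⊢
        omega
      rw [if_neg h1, if_neg h2, if_neg h3, if_neg h4]
      show (if b < a then (1:ℝ) else -1) = -(if a < b then (1:ℝ) else -1)
      split_ifs with ha hb
      · exfalso; omega
      · norm_num
      · norm_num
      · exfalso; omega

/-- The swap equivalence on the training set. -/
def eT (n p q : ℕ) : ↥(T n p q) ≃ ↥(T n p q) where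
  toFun := fun u => ⟨((u : ℕ × ℕ).2, (u : ℕ × ℕ).1), swap_mem_T u.2⟩
  invFun := fun u => ⟨((u : ℕ × ℕ).2, (u : ℕ × ℕ).1), swap_mem_T u.2⟩
  left_inv := fun u => Subtype.ext rfl
  right_inv := fun u => Subtype.ext rfl

lemma dual_antisym (u : ↥(T n p q)) :
    dual n p q κs κo κd c (eT n p q u) = - dual n p q κs κo κd c u := by
  have heT : ∀ v : ↥(T n p q), eT n p q (eT n p q v) = v := fun v => Subtype.ext rfl
  have hMswap : ∀ u v : ↥(T n p q),
      (Kmat n p q κs κo κd + c⁻¹ • (1 : Matrix ↥(T n p q) ↥(T n p q) ℝ)) u (eT n p q v) =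
      (Kmat n p q κs κo κd + c⁻¹ • (1 : Matrix ↥(T n p q) ↥(T n p q) ℝ)) (eT n p q u) v := by
    intro u v
    have hone : (u = eT n p q v) ↔ (eT n p q u = v) := by
      constructor
      · rintro rfl; exact heT v
      · rintro rfl; exact (heT u).symm
    simp only [Matrix.add_apply, Matrix.smul_apply, smul_eq_mul, Kmat, Matrix.one_apply]
    rw [if_congr hone rfl rfl]
    have hks : ker κs κo κd (u : ℕ × ℕ) ((eT n p q v : ℕ × ℕ)) =
        ker κs κo κd ((eT n p q u : ℕ × ℕ)) (v : ℕ × ℕ) := ker_swap _ _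
    rw [hks]
  have ha' : (Kmat n p q κs κo κd + c⁻¹ • (1 : Matrix ↥(T n p q) ↥(T n p q) ℝ)) *ᵥ
      (fun v => - dual n p q κs κo κd c (eT n p q v)) = fun u => lab p q u.1 := by
    funext u
    have hfs := congrFun (full_system hq1 hqp hpn hκd hκo hκs hc) (eT n p q u)
    simp only [Matrix.mulVec, dotProduct] at hfs ⊢
    have hre : ∑ v : ↥(T n p q),
        (Kmat n p q κs κo κd + c⁻¹ • (1 : Matrix ↥(T n p q) ↥(T n p q) ℝ)) u v *
          dual n p q κs κo κd c (eT n p q v) =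
        ∑ v : ↥(T n p q),
        (Kmat n p q κs κo κd + c⁻¹ • (1 : Matrix ↥(T n p q) ↥(T n p q) ℝ)) (eT n p q u) v *
          dual n p q κs κo κd c v := by
      calc ∑ v : ↥(T n p q),
          (Kmat n p q κs κo κd + c⁻¹ • (1 : Matrix ↥(T n p q) ↥(T n p q) ℝ)) u v *
            dual n p q κs κo κd c (eT n p q v)
          = ∑ v : ↥(T n p q),
            (Kmat n p q κs κo κd + c⁻¹ • (1 : Matrix ↥(T n p q) ↥(T n p q) ℝ)) u (eT n p q v) *
              dual n p q κs κo κd c (eT n p q (eT n p q v)) :=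
            (Equiv.sum_comp (eT n p q) (fun v =>
              (Kmat n p q κs κo κd + c⁻¹ • (1 : Matrix ↥(T n p q) ↥(T n p q) ℝ)) u v *
                dual n p q κs κo κd c (eT n p q v))).symm
        _ = ∑ v : ↥(T n p q),
            (Kmat n p q κs κo κd + c⁻¹ • (1 : Matrix ↥(T n p q) ↥(T n p q) ℝ)) (eT n p q u) v *
              dual n p q κs κo κd c v := by
            refine Finset.sum_congr rfl fun v _ => ?_
            rw [heT v, hMswap]
    calc ∑ v : ↥(T n p q),
        (Kmat n p q κs κo κd + c⁻¹ • (1 : Matrix ↥(T n p q) ↥(T n p q) ℝ)) u v *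
          (- dual n p q κs κo κd c (eT n p q v))
        = - ∑ v : ↥(T n p q),
          (Kmat n p q κs κo κd + c⁻¹ • (1 : Matrix ↥(T n p q) ↥(T n p q) ℝ)) u v *
            dual n p q κs κo κd c (eT n p q v) := by
          simp [mul_neg]
      _ = - ∑ v : ↥(T n p q),
          (Kmat n p q κs κo κd + c⁻¹ • (1 : Matrix ↥(T n p q) ↥(T n p q) ℝ)) (eT n p q u) v *
            dual n p q κs κo κd c v := by rw [hre]
      _ = - lab p q ((eT n p q u : ℕ × ℕ)) := by rw [hfs]
      _ = lab p q (u : ℕ × ℕ) := by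
          have hne := ne_of_mem_T hq1 hqp u.2
          have hls := lab_swap (p := p) (q := q) hqp hne
          show - lab p q ((u : ℕ × ℕ).2, (u : ℕ × ℕ).1) = lab p q (u : ℕ × ℕ)
          rw [hls]; ring
  have hequ := dual_unique hq1 hqp hpn hκd hκo hκs hc _ ha'
  have h2 := congrFun hequ u
  linarith [h2]

lemma aAt_swap (j k : ℕ) :
    aAt n p q κs κo κd c (k, j) = - aAt n p q κs κo κd c (j, k) := by
  by_cases h : (j, k) ∈ T n p q
  · have h2 : (k, j) ∈ T n p q := swap_mem_T h
    rw [aAt, aAt, dif_pos h, dif_pos h2]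
    have := dual_antisym hq1 hqp hpn hκd hκo hκs hc ⟨(j, k), h⟩
    exact this
  · have h2 : (k, j) ∉ T n p q := fun hh => h (swap_mem_T hh)
    rw [aAt, aAt, dif_neg h, dif_neg h2, neg_zero]

end Main
/-- Sum of dual coefficients over pairs with first coordinate `j`. -/
def S1 (n p q : ℕ) (κs κo κd c : ℝ) (j : ℕ) : ℝ :=
  ∑ u ∈ T n p q, (if j = u.1 then aAt n p q κs κo κd c u else 0)

/-- Sum of dual coefficients over pairs with second coordinate `j`. -/
def S2 (n p q : ℕ) (κs κo κd c : ℝ) (j : ℕ) : ℝ :=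
  ∑ u ∈ T n p q, (if j = u.2 then aAt n p q κs κo κd c u else 0)

/-- Total sum of dual coefficients. -/
def Stot (n p q : ℕ) (κs κo κd c : ℝ) : ℝ :=
  ∑ u ∈ T n p q, aAt n p q κs κo κd c u

section MainD

variable {n p q : ℕ} {κs κo κd c : ℝ}
variable (hq1 : 1 ≤ q) (hqp : q < p) (hpn : p ≤ n)
variable (hκd : 0 ≤ κd) (hκo : κd < κo) (hκs : 2 * (κo - κd) ≤ κs - κd) (hc : 0 < c)

include hq1 hqp hpn hκd hκo hκs hc

lemma Stot_eq_zero : Stot n p q κs κo κd c = 0 := by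
  have hst : ∀ u : ℕ × ℕ, u ∈ T n p q ↔ (Equiv.prodComm ℕ ℕ) u ∈ T n p q := by
    intro u
    constructor
    · exact fun h => swap_mem_T h
    · exact fun h => swap_mem_T h
  have key : ∑ u ∈ T n p q, aAt n p q κs κo κd c u =
      ∑ u ∈ T n p q, aAt n p q κs κo κd c (u.2, u.1) :=
    Finset.sum_equiv (Equiv.prodComm ℕ ℕ) hst (fun u _ => rfl)
  have key2 : ∑ u ∈ T n p q, aAt n p q κs κo κd c (u.2, u.1) =
      - ∑ u ∈ T n p q, aAt n p q κs κo κd c u := by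
    rw [← Finset.sum_neg_distrib]
    refine Finset.sum_congr rfl fun u _ => ?_
    exact aAt_swap hq1 hqp hpn hκd hκo hκs hc u.1 u.2
  unfold Stot
  linarith [key.trans key2]

lemma S2_eq_neg_S1 (j : ℕ) : S2 n p q κs κo κd c j = - S1 n p q κs κo κd c j := by
  have hst : ∀ u : ℕ × ℕ, u ∈ T n p q ↔ (Equiv.prodComm ℕ ℕ) u ∈ T n p q := by
    intro u
    constructor
    · exact fun h => swap_mem_T h
    · exact fun h => swap_mem_T h
  have key : S2 n p q κs κo κd c j =
      ∑ u ∈ T n p q, (if j = u.1 then aAt n p q κs κo κd c (u.2, u.1) else 0) :=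
    Finset.sum_equiv (Equiv.prodComm ℕ ℕ) hst (fun u _ => rfl)
  rw [key]
  unfold S1
  rw [← Finset.sum_neg_distrib]
  refine Finset.sum_congr rfl fun u _ => ?_
  rw [aAt_swap hq1 hqp hpn hκd hκo hκs hc u.1 u.2]
  split_ifs <;> simp

lemma row_raw (v : ℕ × ℕ) (hv : v ∈ T n p q) :
    κd * Stot n p q κs κo κd c + (κo - κd) * S1 n p q κs κo κd c v.1 +
      (κo - κd) * S2 n p q κs κo κd c v.2 +
      (κs - κd - 2 * (κo - κd)) * aAt n p q κs κo κd c v +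
      c⁻¹ * aAt n p q κs κo κd c v = lab p q v := by
  have hfs := congrFun (full_system hq1 hqp hpn hκd hκo hκs hc) ⟨v, hv⟩
  rw [Matrix.add_mulVec, Matrix.smul_mulVec, Matrix.one_mulVec] at hfs
  simp only [Pi.add_apply, Pi.smul_apply, smul_eq_mul] at hfs
  have hKv : (Kmat n p q κs κo κd *ᵥ dual n p q κs κo κd c) ⟨v, hv⟩ =
      ∑ u ∈ T n p q, ker κs κo κd v u * aAt n p q κs κo κd c u := by
    simp only [Matrix.mulVec, dotProduct, Kmat]
    rw [Finset.univ_eq_attach,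
      ← Finset.sum_attach (T n p q) (fun u => ker κs κo κd v u * aAt n p q κs κo κd c u)]
    refine Finset.sum_congr rfl fun u _ => ?_
    congr 1
    show dual n p q κs κo κd c u = dite _ _ _
    rw [dif_pos u.2]
  have hdec : ∑ u ∈ T n p q, ker κs κo κd v u * aAt n p q κs κo κd c u =
      κd * Stot n p q κs κo κd c + ((κo - κd) * S1 n p q κs κo κd c v.1 +
        (κo - κd) * S2 n p q κs κo κd c v.2 +
        (κs - κd - 2 * (κo - κd)) * aAt n p q κs κo κd c v) := by
    have hterm : ∀ u ∈ T n p q, ker κs κo κd v u * aAt n p q κs κo κd c u =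
        κd * aAt n p q κs κo κd c u +
          ((κo - κd) * (if v.1 = u.1 then aAt n p q κs κo κd c u else 0) +
           (κo - κd) * (if v.2 = u.2 then aAt n p q κs κo κd c u else 0) +
           (κs - κd - 2 * (κo - κd)) * (if v = u then aAt n p q κs κo κd c u else 0)) := by
      intro u _
      rw [ker_decomp]
      split_ifs <;> ring
    rw [Finset.sum_congr rfl hterm, Finset.sum_add_distrib, Finset.sum_add_distrib,
      Finset.sum_add_distrib, ← Finset.mul_sum, ← Finset.mul_sum, ← Finset.mul_sum,
      ← Finset.mul_sum, Finset.sum_ite_eq (T n p q) v (fun u => aAt n p q κs κo κd c u),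
      if_pos hv]
    rfl
  have hav : dual n p q κs κo κd c ⟨v, hv⟩ = aAt n p q κs κo κd c v := by
    show _ = dite _ _ _
    rw [dif_pos hv]
  rw [hKv, hdec, hav] at hfs
  show _ = lab p q v
  linarith [hfs]

lemma row (v : ℕ × ℕ) (hv : v ∈ T n p q) :
    (κo - κd) * (S1 n p q κs κo κd c v.1 - S1 n p q κs κo κd c v.2) +
      (κs - κd - 2 * (κo - κd)) * aAt n p q κs κo κd c v +
      c⁻¹ * aAt n p q κs κo κd c v = lab p q v := by
  have h := row_raw hq1 hqp hpn hκd hκo hκs hc v hv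
  rw [Stot_eq_zero hq1 hqp hpn hκd hκo hκs hc,
    S2_eq_neg_S1 hq1 hqp hpn hκd hκo hκs hc v.2] at h
  linarith [h]

end MainD
section MainE

variable {n p q : ℕ} {κs κo κd c : ℝ}
variable (hn : 3 ≤ n) (hq1 : 1 ≤ q) (hqp : q < p) (hpn : p ≤ n) (hgap : 2 ≤ p - q)
variable (hκd : 0 ≤ κd) (hκo : κd < κo) (hκs : 2 * (κo - κd) ≤ κs - κd) (hc : 0 < c)

include hq1 hqp hpn hgap hκd hκo hκs hc

lemma S1_eval (j : ℕ) :
    S1 n p q κs κo κd c j =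
      aAt n p q κs κo κd c (j, j + 1) + aAt n p q κs κo κd c (j, j - 1) +
        ((if j = p then aAt n p q κs κo κd c (p, q) else 0) +
         (if j = q then aAt n p q κs κo κd c (q, p) else 0)) := by
  have hdAB : Disjoint ((Finset.Icc 1 (n - 1)).image fun j => (j, j + 1))
      ((Finset.Icc 1 (n - 1)).image fun j => (j + 1, j)) := by
    rw [Finset.disjoint_left]
    rintro u hA hB
    obtain ⟨i, hi, rfl⟩ := Finset.mem_image.mp hA
    obtain ⟨k, hk, heq⟩ := Finset.mem_image.mp hB
    simp only [Prod.mk.injEq] at heq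
    omega
  have hdABE : Disjoint (((Finset.Icc 1 (n - 1)).image fun j => (j, j + 1)) ∪
      ((Finset.Icc 1 (n - 1)).image fun j => (j + 1, j)))
      ({(p, q), (q, p)} : Finset (ℕ × ℕ)) := by
    rw [Finset.disjoint_left]
    rintro u hAB hE
    simp only [Finset.mem_insert, Finset.mem_singleton] at hE
    rcases Finset.mem_union.mp hAB with hA | hB
    · obtain ⟨i, hi, rfl⟩ := Finset.mem_image.mp hA
      rcases hE with he | he <;> (simp only [Prod.mk.injEq] at he; omega)
    · obtain ⟨i, hi, rfl⟩ := Finset.mem_image.mp hB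
      rcases hE with he | he <;> (simp only [Prod.mk.injEq] at he; omega)
  have hinjA : ∀ x ∈ Finset.Icc 1 (n - 1), ∀ y ∈ Finset.Icc 1 (n - 1),
      (fun j => ((j, j + 1) : ℕ × ℕ)) x = (fun j => (j, j + 1)) y → x = y := by
    intro x _ y _ h; simpa using (Prod.mk.injEq _ _ _ _ ▸ h).1
  have hinjB : ∀ x ∈ Finset.Icc 1 (n - 1), ∀ y ∈ Finset.Icc 1 (n - 1),
      (fun j => ((j + 1, j) : ℕ × ℕ)) x = (fun j => (j + 1, j)) y → x = y := by
    intro x _ y _ h; simpa using (Prod.mk.injEq _ _ _ _ ▸ h).2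
  show ∑ u ∈ (((Finset.Icc 1 (n - 1)).image fun j => (j, j + 1)) ∪
      ((Finset.Icc 1 (n - 1)).image fun j => (j + 1, j)) ∪ {(p, q), (q, p)}),
      (if j = u.1 then aAt n p q κs κo κd c u else 0) = _
  rw [Finset.sum_union hdABE, Finset.sum_union hdAB, Finset.sum_image hinjA,
    Finset.sum_image hinjB]
  have hA : ∑ i ∈ Finset.Icc 1 (n - 1),
      (if j = i then aAt n p q κs κo κd c (i, i + 1) else 0) =
      aAt n p q κs κo κd c (j, j + 1) := by
    rw [Finset.sum_ite_eq (Finset.Icc 1 (n - 1)) j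
      (fun i => aAt n p q κs κo κd c (i, i + 1))]
    by_cases hj : j ∈ Finset.Icc 1 (n - 1)
    · rw [if_pos hj]
    · rw [if_neg hj, aAt, dif_neg]
      intro hmem
      rw [mem_T_adj hq1 hqp hgap] at hmem
      rw [Finset.mem_Icc] at hj
      omega
  have hB : ∑ i ∈ Finset.Icc 1 (n - 1),
      (if j = i + 1 then aAt n p q κs κo κd c (i + 1, i) else 0) =
      aAt n p q κs κo κd c (j, j - 1) := by
    match j with
    | 0 =>
      rw [Finset.sum_eq_zero (fun i _ => by rw [if_neg]; omega)]
      rw [aAt, dif_neg]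
      intro hmem
      rw [mem_T_iff] at hmem
      rcases hmem with ⟨k, h1, h2, he⟩ | ⟨k, h1, h2, he⟩ | he | he <;>
        (simp only [Prod.mk.injEq] at he; omega)
    | (k + 1) =>
      simp only [Nat.add_sub_cancel]
      have hcong : ∀ i ∈ Finset.Icc 1 (n - 1),
          (if k + 1 = i + 1 then aAt n p q κs κo κd c (i + 1, i) else 0) =
          (if k = i then aAt n p q κs κo κd c (i + 1, i) else 0) := by
        intro i _
        rcases eq_or_ne k i with rfl | hne
        · rw [if_pos rfl, if_pos rfl]
        · rw [if_neg (by omega), if_neg hne]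
      rw [Finset.sum_congr rfl hcong,
        Finset.sum_ite_eq (Finset.Icc 1 (n - 1)) k
          (fun i => aAt n p q κs κo κd c (i + 1, i))]
      by_cases hk : k ∈ Finset.Icc 1 (n - 1)
      · rw [if_pos hk]
      · rw [if_neg hk, aAt, dif_neg]
        intro hmem
        rw [mem_T_rev hq1 hqp hgap] at hmem
        rw [Finset.mem_Icc] at hk
        omega
  have hE : ∑ u ∈ ({(p, q), (q, p)} : Finset (ℕ × ℕ)),
      (if j = u.1 then aAt n p q κs κo κd c u else 0) =
      (if j = p then aAt n p q κs κo κd c (p, q) else 0) +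
      (if j = q then aAt n p q κs κo κd c (q, p) else 0) := by
    rw [Finset.sum_insert (by
      simp only [Finset.mem_singleton, Prod.mk.injEq, not_and]
      intro h; omega), Finset.sum_singleton]
  rw [hA, hB, hE]

lemma S1_val (j : ℕ) (hj : 1 ≤ j) :
    S1 n p q κs κo κd c j =
      bbar n p q κs κo κd c j - bbar n p q κs κo κd c (j - 1) +
        hbar n p q κs κo κd c *
          ((if j = p then 1 else 0) - (if j = q then 1 else 0)) := by
  rw [S1_eval hq1 hqp hpn hgap hκd hκo hκs hc j]
  have h1 : aAt n p q κs κo κd c (j, j - 1) = - bbar n p q κs κo κd c (j - 1) := by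
    rw [aAt_swap hq1 hqp hpn hκd hκo hκs hc (j - 1) j]
    unfold bbar
    rw [show j - 1 + 1 = j from by omega]
  have h2 : (if j = p then aAt n p q κs κo κd c (p, q) else 0) =
      hbar n p q κs κo κd c * (if j = p then 1 else 0) := by
    split_ifs <;> simp [hbar]
  have h3 : (if j = q then aAt n p q κs κo κd c (q, p) else 0) =
      - (hbar n p q κs κo κd c * (if j = q then 1 else 0)) := by
    split_ifs with h
    · rw [aAt_swap hq1 hqp hpn hκd hκo hκs hc p q]
      simp [hbar]
    · simp
  rw [h1, h2, h3]
  unfold bbar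
  ring

omit hq1 hpn hκd hκo hκs hc in
lemma lab_adj (t : ℕ) : lab p q (t + 1, t + 2) = 1 := by
  have h1 : ((t + 1, t + 2) : ℕ × ℕ) ≠ (p, q) := by
    intro h; simp only [Prod.mk.injEq] at h; omega
  have h2 : ((t + 1, t + 2) : ℕ × ℕ) ≠ (q, p) := by
    intro h; simp only [Prod.mk.injEq] at h; omega
  rw [lab, if_neg h1, if_neg h2, if_pos (by omega : (t + 1 : ℕ) < t + 2)]

omit hpn hgap hκd hκo hκs hc in
lemma bbar_zero : bbar n p q κs κo κd c 0 = 0 := by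
  rw [bbar, aAt, dif_neg]
  intro hmem
  rw [mem_T_iff] at hmem
  rcases hmem with ⟨k, h1, h2, he⟩ | ⟨k, h1, h2, he⟩ | he | he <;>
    (simp only [Prod.mk.injEq] at he; omega)

omit hq1 hgap hκd hκo hκs hc in
include hn in
lemma bbar_n : bbar n p q κs κo κd c n = 0 := by
  rw [bbar, aAt, dif_neg]
  intro hmem
  rw [mem_T_iff] at hmem
  rcases hmem with ⟨k, h1, h2, he⟩ | ⟨k, h1, h2, he⟩ | he | he <;>
    (simp only [Prod.mk.injEq] at he; omega)

lemma EQ1 (t : ℕ) (ht : t + 1 ≤ n - 1) :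
    (κs - κd + c⁻¹) * bbar n p q κs κo κd c (t + 1) -
      (κo - κd) * (bbar n p q κs κo κd c t + bbar n p q κs κo κd c (t + 2)) =
    1 - (κo - κd) * hbar n p q κs κo κd c *
      ((if t + 1 = p then 1 else 0) + (if t + 2 = q then 1 else 0) -
       (if t + 1 = q then 1 else 0) - (if t + 2 = p then 1 else 0)) := by
  have hv : ((t + 1, t + 2) : ℕ × ℕ) ∈ T n p q :=
    (mem_T_adj hq1 hqp hgap).mpr ⟨by omega, ht⟩
  have hR : (κo - κd) * (S1 n p q κs κo κd c (t + 1) - S1 n p q κs κo κd c (t + 2)) +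
      (κs - κd - 2 * (κo - κd)) * aAt n p q κs κo κd c (t + 1, t + 2) +
      c⁻¹ * aAt n p q κs κo κd c (t + 1, t + 2) = lab p q (t + 1, t + 2) :=
    row hq1 hqp hpn hκd hκo hκs hc (t + 1, t + 2) hv
  rw [lab_adj hqp hgap, show aAt n p q κs κo κd c (t + 1, t + 2) =
    bbar n p q κs κo κd c (t + 1) from rfl] at hR
  have hS1a := S1_val hq1 hqp hpn hgap hκd hκo hκs hc (t + 1) (by omega)
  have hS1b := S1_val hq1 hqp hpn hgap hκd hκo hκs hc (t + 2) (by omega)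
  rw [show t + 1 - 1 = t from rfl] at hS1a
  rw [show t + 2 - 1 = t + 1 from rfl] at hS1b
  rw [hS1a, hS1b] at hR
  linear_combination hR

lemma EQ2 :
    (κs - κd + c⁻¹) * hbar n p q κs κo κd c +
      (κo - κd) * (bbar n p q κs κo κd c (q - 1) + bbar n p q κs κo κd c p -
        bbar n p q κs κo κd c q - bbar n p q κs κo κd c (p - 1)) = 1 := by
  have hv : ((p, q) : ℕ × ℕ) ∈ T n p q := by
    unfold T
    rw [Finset.mem_union]
    exact Or.inr (Finset.mem_insert_self _ _)
  have hR : (κo - κd) * (S1 n p q κs κo κd c p - S1 n p q κs κo κd c q) +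
      (κs - κd - 2 * (κo - κd)) * aAt n p q κs κo κd c (p, q) +
      c⁻¹ * aAt n p q κs κo κd c (p, q) = lab p q (p, q) :=
    row hq1 hqp hpn hκd hκo hκs hc (p, q) hv
  rw [show lab p q (p, q) = 1 from by rw [lab, if_pos rfl],
    show aAt n p q κs κo κd c (p, q) = hbar n p q κs κo κd c from rfl] at hR
  have hS1p := S1_val hq1 hqp hpn hgap hκd hκo hκs hc p (by omega)
  have hS1q := S1_val hq1 hqp hpn hgap hκd hκo hκs hc q hq1
  rw [if_pos rfl, if_neg (by omega : p ≠ q)] at hS1p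
  rw [if_pos rfl, if_neg (by omega : q ≠ p)] at hS1q
  rw [hS1p, hS1q] at hR
  linear_combination hR

end MainE
lemma Bmat_mulVec {n : ℕ} (hn : 3 ≤ n) (α ctil : ℝ) (w : ℕ → ℝ)
    (hw0 : w 0 = 0) (hwn : w n = 0) (i : Fin (n - 1)) :
    (Bmat n α ctil *ᵥ fun i' : Fin (n - 1) => w ((i' : ℕ) + 1)) i =
      (1 + ctil⁻¹) * w ((i : ℕ) + 1) - (1 - α) / 2 * (w (i : ℕ) + w ((i : ℕ) + 2)) := by
  have hdecomp : ∀ j : Fin (n - 1), Bmat n α ctil i j =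
      (1 + ctil⁻¹) * (if i = j then 1 else 0) -
        (1 - α) / 2 * ((if (j : ℕ) + 1 = (i : ℕ) then 1 else 0) +
          (if (i : ℕ) + 1 = (j : ℕ) then 1 else 0)) := by
    intro j
    unfold Bmat
    by_cases h1 : i = j
    · subst h1
      rw [if_pos rfl, if_pos rfl, if_neg (by omega)]
      ring
    · have hv : (i : ℕ) ≠ (j : ℕ) := fun h => h1 (Fin.ext h)
      rw [if_neg h1, if_neg h1]
      by_cases h2 : (i : ℕ) + 1 = (j : ℕ)
      · rw [if_pos (Or.inl h2), if_neg (by omega), if_pos h2]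
        ring
      · by_cases h3 : (j : ℕ) + 1 = (i : ℕ)
        · rw [if_pos (Or.inr h3), if_pos h3, if_neg h2]
          ring
        · rw [if_neg (by tauto), if_neg h3, if_neg h2]
          ring
  have hterm : ∀ j : Fin (n - 1), Bmat n α ctil i j * w ((j : ℕ) + 1) =
      (1 + ctil⁻¹) * (if i = j then w ((j : ℕ) + 1) else 0) -
        (1 - α) / 2 * ((if (j : ℕ) + 1 = (i : ℕ) then w ((j : ℕ) + 1) else 0) +
          (if (i : ℕ) + 1 = (j : ℕ) then w ((j : ℕ) + 1) else 0)) := by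
    intro j
    rw [hdecomp j]
    split_ifs <;> ring
  show ∑ j : Fin (n - 1), Bmat n α ctil i j * w ((j : ℕ) + 1) = _
  rw [Finset.sum_congr rfl (fun j _ => hterm j), Finset.sum_sub_distrib,
    ← Finset.mul_sum, ← Finset.mul_sum, Finset.sum_add_distrib]
  have hSA : ∑ j : Fin (n - 1), (if i = j then w ((j : ℕ) + 1) else 0) =
      w ((i : ℕ) + 1) := by
    rw [Finset.sum_ite_eq Finset.univ i (fun j : Fin (n - 1) => w ((j : ℕ) + 1)),
      if_pos (Finset.mem_univ i)]
  have hSB : ∑ j : Fin (n - 1), (if (j : ℕ) + 1 = (i : ℕ) then w ((j : ℕ) + 1) else 0) =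
      w (i : ℕ) := by
    by_cases hi0 : (i : ℕ) = 0
    · rw [Finset.sum_eq_zero (fun j _ => if_neg (by omega)), hi0, hw0]
    · obtain ⟨k, hk⟩ : ∃ k, (i : ℕ) = k + 1 := ⟨(i : ℕ) - 1, by omega⟩
      have hklt : k < n - 1 := by have := i.isLt; omega
      rw [Finset.sum_eq_single (⟨k, hklt⟩ : Fin (n - 1))]
      · rw [if_pos (by simp; omega)]
        show w (k + 1) = w (i : ℕ)
        rw [hk]
      · intro j _ hj
        refine if_neg fun hh => hj (Fin.ext ?_)
        simp only []
        omega
      · intro h; exact absurd (Finset.mem_univ _) h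
  have hSC : ∑ j : Fin (n - 1), (if (i : ℕ) + 1 = (j : ℕ) then w ((j : ℕ) + 1) else 0) =
      w ((i : ℕ) + 2) := by
    by_cases hlt : (i : ℕ) + 1 < n - 1
    · rw [Finset.sum_eq_single (⟨(i : ℕ) + 1, hlt⟩ : Fin (n - 1))]
      · rw [if_pos rfl]
      · intro j _ hj
        refine if_neg fun hh => hj (Fin.ext ?_)
        simp only []
        omega
      · intro h; exact absurd (Finset.mem_univ _) h
    · rw [Finset.sum_eq_zero (fun j _ => if_neg (by have := j.isLt; omega)),
        show (i : ℕ) + 2 = n from by have := i.isLt; omega, hwn]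
  rw [hSA, hSB, hSC]
/-- The reduced dual coefficients satisfy the reduced `(n−1)`-dimensional linear
system. Here `α = 1 − 2δₒ/δₛ` and `c̃ = c·δₛ`. -/
theorem reduced_linear_system
    (n p q : ℕ) (κs κo κd c : ℝ)
    (hn : 3 ≤ n) (hq1 : 1 ≤ q) (hqp : q < p) (hpn : p ≤ n) (hgap : 2 ≤ p - q)
    (hκd : 0 ≤ κd) (hκo : κd < κo) (hκs : 2 * (κo - κd) ≤ κs - κd) (hc : 0 < c) :
    (∀ i : Fin (n - 1),
      (κs - κd) *
          (Bmat n (1 - 2 * (κo - κd) / (κs - κd)) (c * (κs - κd)) *ᵥ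
            fun i' : Fin (n - 1) => bbar n p q κs κo κd c ((i' : ℕ) + 1)) i =
        1 - (κo - κd) * hbar n p q κs κo κd c *
          (stdBasis n p i + stdBasis n (q - 1) i - stdBasis n q i -
            stdBasis n (p - 1) i)) ∧
    (κs - κd) * (1 + (c * (κs - κd))⁻¹) * hbar n p q κs κo κd c +
        (κo - κd) * (bbar n p q κs κo κd c (q - 1) + bbar n p q κs κo κd c p -
          bbar n p q κs κo κd c q - bbar n p q κs κo κd c (p - 1)) = 1 := by
  have hδs : (0 : ℝ) < κs - κd := by linarith
  have hA : (κs - κd) * (1 + (c * (κs - κd))⁻¹) = (κs - κd) + c⁻¹ := by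
    field_simp
  constructor
  · intro i
    have hB := Bmat_mulVec hn (1 - 2 * (κo - κd) / (κs - κd)) (c * (κs - κd))
      (bbar n p q κs κo κd c)
      (bbar_zero hq1 hqp)
      (bbar_n hn hqp hpn) i
    rw [hB]
    have hstep : (κs - κd) *
        ((1 + (c * (κs - κd))⁻¹) * bbar n p q κs κo κd c ((i : ℕ) + 1) -
          (1 - (1 - 2 * (κo - κd) / (κs - κd))) / 2 *
            (bbar n p q κs κo κd c (i : ℕ) + bbar n p q κs κo κd c ((i : ℕ) + 2))) =
        ((κs - κd) + c⁻¹) * bbar n p q κs κo κd c ((i : ℕ) + 1) -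
          (κo - κd) *
            (bbar n p q κs κo κd c (i : ℕ) + bbar n p q κs κo κd c ((i : ℕ) + 2)) := by
      field_simp
      ring
    rw [hstep]
    have hE := EQ1 hq1 hqp hpn hgap hκd hκo hκs hc (i : ℕ) (by have := i.isLt; omega)
    have e1 : (if (i : ℕ) + 2 = q then (1 : ℝ) else 0) =
        (if (i : ℕ) + 1 = q - 1 then (1 : ℝ) else 0) := by
      by_cases h : (i : ℕ) + 2 = q
      · rw [if_pos h, if_pos (by omega)]
      · rw [if_neg h, if_neg (by omega)]
    have e2 : (if (i : ℕ) + 2 = p then (1 : ℝ) else 0) =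
        (if (i : ℕ) + 1 = p - 1 then (1 : ℝ) else 0) := by
      by_cases h : (i : ℕ) + 2 = p
      · rw [if_pos h, if_pos (by omega)]
      · rw [if_neg h, if_neg (by omega)]
    rw [e1, e2] at hE
    unfold stdBasis
    linear_combination hE
  · rw [hA]
    exact EQ2 hq1 hqp hpn hgap hκd hκo hκs hc
end TIExc
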